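/- The symmetric bilinear form b((σ,q),(μ,ν)) := a(W(σ,q), W(μ,ν)) on W^{−1/2}₂(Γ) × W̃^{1/2}₂(Γ) is continuous and coercive: b((σ,q),(σ,q)) ≥ C₁‖σ‖²_{W^{−1/2}₂(Γ)} + C₂‖q‖²_{W̃^{1/2}₂(Γ)} for some constants C₁, C₂ > 0. -/

import Mathlib

open scoped RealInnerProductSpace

/-- `X` models `W^{-1/2}₂(Γ)` (densities `σ` of simple layer
potentials) and `Y` models `W̃^{1/2}₂(Γ)` (densities `q` of double layer
potentials); `V` models the Hilbert space `HK¹_{Γ,Δ=0}` with inner product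
`a(w,z) = ∫_{G∪G'} ∇w·∇z`; by Theorem 3, `(σ,q) ↦ W(σ,q) = Uσ + Vq` is an
isomorphism `Wmap : X × Y ≃L V`.  Then the symmetric bilinear form
`b((σ,q),(μ,ν)) := a(W(σ,q), W(μ,ν))` on
`W^{-1/2}₂(Γ) × W̃^{1/2}₂(Γ)` is continuous, symmetric, and coercive:
`b((σ,q),(σ,q)) ≥ C₁‖σ‖² + C₂‖q‖²` for some constants `C₁, C₂ > 0`. -/
theorem stmt_8
    {X Y V : Type*}
    [NormedAddCommGroup X] [NormedSpace ℝ X]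
    [NormedAddCommGroup Y] [NormedSpace ℝ Y]
    [NormedAddCommGroup V] [InnerProductSpace ℝ V]
    (Wmap : (X × Y) ≃L[ℝ] V) :
    (∃ M : ℝ, 0 < M ∧ ∀ p p' : X × Y,
        |⟪Wmap p, Wmap p'⟫| ≤ M * ‖p‖ * ‖p'‖) ∧
    (∀ p p' : X × Y, ⟪Wmap p, Wmap p'⟫ = ⟪Wmap p', Wmap p⟫) ∧
    (∃ C₁ C₂ : ℝ, 0 < C₁ ∧ 0 < C₂ ∧ ∀ σ : X, ∀ q : Y,
        ⟪Wmap (σ, q), Wmap (σ, q)⟫ ≥ C₁ * ‖σ‖ ^ 2 + C₂ * ‖q‖ ^ 2) := by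
  refine ⟨⟨(‖(Wmap : (X × Y) →L[ℝ] V)‖ + 1) ^ 2, by positivity, fun p p' => ?_⟩,
    fun p p' => real_inner_comm _ _, ?_⟩
  · calc |⟪Wmap p, Wmap p'⟫| ≤ ‖Wmap p‖ * ‖Wmap p'‖ := abs_real_inner_le_norm _ _
      _ ≤ ((‖(Wmap : (X × Y) →L[ℝ] V)‖ + 1) * ‖p‖) *
          ((‖(Wmap : (X × Y) →L[ℝ] V)‖ + 1) * ‖p'‖) := by
        gcongr
        · exact (Wmap.toContinuousLinearMap.le_opNorm p).trans
            (by nlinarith [norm_nonneg p])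
        · exact (Wmap.toContinuousLinearMap.le_opNorm p').trans
            (by nlinarith [norm_nonneg p'])
      _ = (‖(Wmap : (X × Y) →L[ℝ] V)‖ + 1) ^ 2 * ‖p‖ * ‖p'‖ := by ring
  · set K : ℝ := ‖(Wmap.symm : V →L[ℝ] (X × Y))‖ + 1 with hK
    have hKpos : 0 < K := by positivity
    refine ⟨(K ^ 2)⁻¹ / 2, (K ^ 2)⁻¹ / 2, by positivity, by positivity, fun σ q => ?_⟩
    have h1 : ‖(σ, q)‖ ≤ K * ‖Wmap (σ, q)‖ := by
      have := Wmap.symm.toContinuousLinearMap.le_opNorm (Wmap (σ, q))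
      simp only [ContinuousLinearEquiv.coe_coe, ContinuousLinearEquiv.symm_apply_apply] at this
      nlinarith [norm_nonneg (Wmap (σ, q))]
    have h2 : ‖σ‖ ≤ ‖(σ, q)‖ := le_max_left _ _
    have h3 : ‖q‖ ≤ ‖(σ, q)‖ := le_max_right _ _
    have h4 : ⟪Wmap (σ, q), Wmap (σ, q)⟫ = ‖Wmap (σ, q)‖ ^ 2 :=
      real_inner_self_eq_norm_sq _
    have h5 : ‖(σ, q)‖ ^ 2 ≤ K ^ 2 * ‖Wmap (σ, q)‖ ^ 2 := by
      nlinarith [norm_nonneg (σ, q), norm_nonneg (Wmap (σ, q))]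
    rw [h4]
    have hK2 : (0:ℝ) < K ^ 2 := by positivity
    rw [ge_iff_le, div_mul_eq_mul_div, div_mul_eq_mul_div, ← add_div,
      div_le_iff₀ (by norm_num : (0:ℝ) < 2)]
    rw [inv_mul_eq_div, inv_mul_eq_div, ← add_div, div_le_iff₀ hK2]
    nlinarith [norm_nonneg σ, norm_nonneg q, norm_nonneg (σ, q)]
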